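/- Every binary word of length 10 encounters the pattern xxx up to ≃, and there exists a binary word of length 9 that avoids xxx up to ≃; that is, the longest binary word avoiding xxx up to ≃ has length 9. -/
import Mathlib


/-- `x` is a (finite, contiguous) factor of the infinite word `w`. -/
def InfFactor {A : Type*} (x : List A) (w : ℕ → A) : Prop :=
  ∃ i : ℕ, x = (List.range x.length).map fun j => w (i + j)

/-- Reversal-equivalence of words: `x ≃ x'` iff `x' = x` or `x'` is the reversal of `x`. -/
def SimRev {A : Type*} (x x' : List A) : Prop := x' = x ∨ x' = x.reverse

/-- The infinite word `w` encounters the pattern `p` up to the relation `sim`: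
`w` has a factor `X₁X₂⋯Xₙ` with each `Xᵢ` nonempty and `sim Xᵢ Xⱼ` whenever `pᵢ = pⱼ`. -/
def Encounters {V A : Type*} (sim : List A → List A → Prop) (p : List V) (w : ℕ → A) : Prop :=
  ∃ X : List (List A), X.length = p.length ∧ (∀ x ∈ X, x ≠ []) ∧
    InfFactor X.flatten w ∧
    ∀ i j : ℕ, i < p.length → j < p.length → p[i]? = p[j]? →
      sim (X.getD i []) (X.getD j [])

/-- The finite word `w` encounters the pattern `p` up to the relation `sim`. -/
def EncountersF {V A : Type*} (sim : List A → List A → Prop) (p : List V) (w : List A) : Prop :=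
  ∃ X : List (List A), X.length = p.length ∧ (∀ x ∈ X, x ≠ []) ∧
    X.flatten <:+: w ∧
    ∀ i j : ℕ, i < p.length → j < p.length → p[i]? = p[j]? →
      sim (X.getD i []) (X.getD j [])

/-- Every binary word of length 10 encounters `xxx` up to `≃`, and some binary word of
length 9 avoids `xxx` up to `≃`: the longest binary word avoiding `xxx` up to `≃`
has length 9. -/
def HasCube (w : List (Fin 2)) : Prop :=
  ∃ n < w.length + 1, ∃ i < w.length + 1, n ≠ 0 ∧ i + 3*n ≤ w.length ∧
    (((w.drop (i+n)).take n = (w.drop i).take n ∨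
      (w.drop (i+n)).take n = ((w.drop i).take n).reverse) ∧
     ((w.drop (i+2*n)).take n = (w.drop i).take n ∨
      (w.drop (i+2*n)).take n = ((w.drop i).take n).reverse))


instance : DecidablePred HasCube := fun w => by unfold HasCube; infer_instance

def allW : ℕ → List (List (Fin 2))
  | 0 => [[]]
  | n+1 => (allW n).flatMap (fun w => [0 :: w, 1 :: w])

theorem mem_allW : ∀ w : List (Fin 2), w ∈ allW w.length := by
  intro w
  induction w with
  | nil => simp [allW]
  | cons a w ih =>
    simp only [List.length_cons, allW, List.mem_flatMap]
    exact ⟨w, ih, by fin_cases a <;> simp⟩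

set_option maxRecDepth 10000 in
theorem allcube : (allW 10).all (fun w => decide (HasCube w)) = true := by decide

theorem all10 (w : List (Fin 2)) (h : w.length = 10) : HasCube w :=
  of_decide_eq_true (List.all_eq_true.mp allcube w (h ▸ mem_allW w))

lemma slice_eq {A : Type*} (s x t : List A) :
    (((s ++ (x ++ t)).drop s.length).take x.length) = x := by
  rw [List.drop_left, List.take_left]

lemma cube_of_enc (w : List (Fin 2))
    (h : EncountersF SimRev (List.replicate 3 ()) w) : HasCube w := by
  obtain ⟨X, hlen, hne, hinf, hsim⟩ := h
  rw [List.length_replicate] at hlen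
  obtain ⟨a, b, c, rfl⟩ := List.length_eq_three.mp hlen
  have hb : SimRev a b := hsim 0 1 (by simp) (by simp) (by simp)
  have hc : SimRev a c := hsim 0 2 (by simp) (by simp) (by simp)
  have hbl : b.length = a.length := by rcases hb with h | h <;> simp [h]
  have hcl : c.length = a.length := by rcases hc with h | h <;> simp [h]
  have hane : a ≠ [] := hne a (by simp)
  obtain ⟨s, t, hw⟩ := hinf
  simp only [List.flatten, List.append_nil] at hw
  -- hw : s ++ (a ++ (b ++ c)) ++ t = w
  have hw' : s ++ (a ++ (b ++ (c ++ t))) = w := by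
    rw [← hw]; simp [List.append_assoc]
  refine ⟨a.length, ?_, s.length, ?_, by simpa using hane, ?_, ?_, ?_⟩
  · have := congrArg List.length hw'; simp at this; omega
  · have := congrArg List.length hw'; simp at this; omega
  · have := congrArg List.length hw'; simp at this; omega
  · -- b slice
    have e1 : (w.drop s.length).take a.length = a := by
      rw [← hw']; exact slice_eq s a (b ++ (c ++ t))
    have e2 : (w.drop (s.length + a.length)).take a.length = b := by
      have : w = (s ++ a) ++ (b ++ (c ++ t)) := by rw [← hw']; simp [List.append_assoc]
      rw [this]
      have := slice_eq (s ++ a) b (c ++ t)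
      simpa [List.length_append, hbl, List.append_assoc] using this
    rw [e1, e2]
    rcases hb with h | h
    · left; rw [h]
    · right; rw [h]
  · have e1 : (w.drop s.length).take a.length = a := by
      rw [← hw']; exact slice_eq s a (b ++ (c ++ t))
    have e3 : (w.drop (s.length + 2 * a.length)).take a.length = c := by
      have : w = (s ++ a ++ b) ++ (c ++ t) := by rw [← hw']; simp [List.append_assoc]
      rw [this]
      have := slice_eq (s ++ a ++ b) c t
      have hl : (s ++ a ++ b).length = s.length + 2 * a.length := by
        simp [List.length_append, hbl]; omega
      rw [hl] at this
      simpa [hcl] using this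
    rw [e1, e3]
    rcases hc with h | h
    · left; rw [h]
    · right; rw [h]

lemma enc_of_cube (w : List (Fin 2)) (h : HasCube w) :
    EncountersF SimRev (List.replicate 3 ()) w := by
  obtain ⟨n, -, i, -, hn, hle, hb, hc⟩ := h
  obtain ⟨a, ha⟩ : ∃ a, (w.drop i).take n = a := ⟨_, rfl⟩
  obtain ⟨b, hbd⟩ : ∃ b, (w.drop (i+n)).take n = b := ⟨_, rfl⟩
  obtain ⟨c, hcd⟩ : ∃ c, (w.drop (i+2*n)).take n = c := ⟨_, rfl⟩
  rw [ha] at hb hc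
  rw [hbd] at hb
  rw [hcd] at hc
  have hla : a.length = n := by
    rw [← ha, List.length_take, List.length_drop]; omega
  have hlb : b.length = n := by
    rw [← hbd, List.length_take, List.length_drop]; omega
  have hlc : c.length = n := by
    rw [← hcd, List.length_take, List.length_drop]; omega
  have key : (w.drop i).take (3*n) = a ++ (b ++ c) := by
    have h3 : 3*n = n + (n + n) := by ring
    rw [h3, List.take_add, List.take_add, List.drop_drop, List.drop_drop]
    have e1 : i + n + n = i + 2*n := by ring
    rw [e1, ha, hbd, hcd]
  refine ⟨[a, b, c], by simp, ?_, ?_, ?_⟩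
  · intro x hx h0
    apply hn
    have hx' : x = a ∨ x = b ∨ x = c := by simpa using hx
    rcases hx' with rfl | rfl | rfl
    · rw [h0] at hla; simpa using hla.symm
    · rw [h0] at hlb; simpa using hlb.symm
    · rw [h0] at hlc; simpa using hlc.symm
  · have hfl : [a, b, c].flatten = a ++ (b ++ c) := by simp
    rw [hfl, ← key]
    exact ((w.drop i).take_prefix (3*n)).isInfix.trans (w.drop_suffix i).isInfix
  · intro i' j' hi hj _
    simp only [List.length_replicate] at hi hj
    rcases hb with rfl | rfl <;> rcases hc with rfl | rfl <;>
      interval_cases i' <;> interval_cases j' <;>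
      simp [SimRev, List.getD, List.reverse_reverse]

theorem longest_binary_avoiding_cube_upto_rev :
    (∀ w : List (Fin 2), w.length = 10 → EncountersF SimRev (List.replicate 3 ()) w) ∧
    (∃ w : List (Fin 2), w.length = 9 ∧ ¬ EncountersF SimRev (List.replicate 3 ()) w) := by
  constructor
  · intro w hw
    exact enc_of_cube w (all10 w hw)
  · refine ⟨[0,0,1,1,0,1,1,0,0], rfl, fun h => ?_⟩
    have hnc : ¬ HasCube [0,0,1,1,0,1,1,0,0] := by decide
    exact hnc (cube_of_enc _ h)
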